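/- K(x) - (xq/(1-xq))·K(xq) = H(xq), where K(x) = Σ_{n≥0} x^n q^{C(n+1,2)} / (xq;q)_n · Σ_{k=0}^{n} (-1)^k/(q;q)_k and H(x) = Σ_{n≥0} (-x)^n q^{C(n,2)} / ((q;q)_n (x;q)_n). -/

import Mathlib

open PowerSeries

noncomputable section
namespace FC

/-- The field `ℚ(q)` of rational functions in `q`. -/
abbrev K : Type := RatFunc ℚ

/-- The variable `q`. -/
def q : K := RatFunc.X

/-- The q-Pochhammer symbol `(a; q)_n = ∏_{i=0}^{n-1} (1 - a q^i)`. -/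
def poch (a : K) (n : ℕ) : K := ∏ i ∈ Finset.range n, (1 - a * q ^ i)

/-- The power series `(x q^s; q)_n = ∏_{i=0}^{n-1} (1 - q^{s+i} x)` in the variable `x`. -/
def pochX (s n : ℕ) : PowerSeries K :=
  ∏ i ∈ Finset.range n, (1 - PowerSeries.C (q ^ (s + i)) * PowerSeries.X)

/-- `J(x) = Σ_{n≥0} (-x)^n q^{C(n,2)} / ((q;q)_n (xq;q)_n)`, defined coefficientwise:
the coefficient of `x^N` is `Σ_{n=0}^{N} (-1)^n q^{C(n,2)}/(q;q)_n · [x^{N-n}] (xq;q)_n⁻¹`. -/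
def J : PowerSeries K :=
  PowerSeries.mk fun N => ∑ n ∈ Finset.range (N + 1),
    ((-1 : K) ^ n * q ^ n.choose 2 / poch q n) * PowerSeries.coeff (N - n) (pochX 1 n)⁻¹

/-- `H(x) = Σ_{n≥0} (-x)^n q^{C(n,2)} / ((q;q)_n (x;q)_n)`. -/
def H : PowerSeries K :=
  PowerSeries.mk fun N => ∑ n ∈ Finset.range (N + 1),
    ((-1 : K) ^ n * q ^ n.choose 2 / poch q n) * PowerSeries.coeff (N - n) (pochX 0 n)⁻¹

/-- `K(x) = Σ_{n≥0} (x^n q^{n(n+1)/2} / (xq;q)_n) · Σ_{k=0}^n (-1)^k/(q;q)_k`. -/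
def Kq : PowerSeries K :=
  PowerSeries.mk fun N => ∑ n ∈ Finset.range (N + 1),
    (q ^ (n * (n + 1) / 2) * ∑ k ∈ Finset.range (n + 1), (-1 : K) ^ k / poch q k) *
      PowerSeries.coeff (N - n) (pochX 1 n)⁻¹

lemma constantCoeff_pochX (s n : ℕ) : PowerSeries.constantCoeff (pochX s n) = 1 := by
  rw [pochX, map_prod]
  simp

lemma constantCoeff_pochX_ne (s n : ℕ) : PowerSeries.constantCoeff (pochX s n) ≠ 0 := by
  rw [constantCoeff_pochX]; exact one_ne_zero

lemma rescale_C' (a : K) : rescale q (PowerSeries.C a) = PowerSeries.C a := by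
  ext n
  rw [PowerSeries.coeff_rescale]
  cases n with
  | zero => simp
  | succ k => simp [PowerSeries.coeff_C]

lemma rescale_pochX (s n : ℕ) : rescale q (pochX s n) = pochX (s + 1) n := by
  rw [pochX, pochX, map_prod]
  refine Finset.prod_congr rfl fun i _ => ?_
  rw [map_sub, map_one, map_mul, rescale_C', rescale_X, ← mul_assoc, ← map_mul, ← pow_succ,
    show s + i + 1 = s + 1 + i from by omega]

lemma rescale_pochX_inv (s n : ℕ) :
    rescale q ((pochX s n)⁻¹) = (pochX (s + 1) n)⁻¹ := by
  rw [PowerSeries.eq_inv_iff_mul_eq_one (constantCoeff_pochX_ne (s+1) n)]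
  rw [← rescale_pochX, ← map_mul,
    PowerSeries.inv_mul_cancel _ (constantCoeff_pochX_ne s n), map_one]

def a (m n : ℕ) : K := PowerSeries.coeff m (pochX 1 n)⁻¹

lemma a_zero (n : ℕ) : a 0 n = 1 := by
  rw [a, PowerSeries.coeff_zero_eq_constantCoeff_apply, PowerSeries.constantCoeff_inv,
    constantCoeff_pochX, inv_one]

lemma pochX_one_succ (n : ℕ) :
    pochX 1 (n + 1) = (1 - PowerSeries.C q * PowerSeries.X) * pochX 2 n := by
  rw [pochX, Finset.prod_range_succ', mul_comm]
  congr 1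
  · norm_num
  · rw [pochX]
    exact Finset.prod_congr rfl fun i _ => by
      rw [show 1 + (i + 1) = 2 + i from by omega]

lemma one_sub_mul_inv (n : ℕ) :
    (1 - PowerSeries.C q * PowerSeries.X) * (pochX 1 (n + 1))⁻¹ = (pochX 2 n)⁻¹ := by
  rw [PowerSeries.eq_inv_iff_mul_eq_one (constantCoeff_pochX_ne 2 n)]
  have h : (1 - PowerSeries.C q * PowerSeries.X) * (pochX 1 (n + 1))⁻¹ * pochX 2 n
      = pochX 1 (n + 1) * (pochX 1 (n + 1))⁻¹ := by
    rw [pochX_one_succ]; ring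
  rw [h, PowerSeries.mul_inv_cancel _ (constantCoeff_pochX_ne 1 (n+1))]

lemma coeff_one_sub_mul (m : ℕ) (P : PowerSeries K) :
    PowerSeries.coeff (m + 1) ((1 - PowerSeries.C q * PowerSeries.X) * P)
      = PowerSeries.coeff (m + 1) P - q * PowerSeries.coeff m P := by
  rw [sub_mul, one_mul, map_sub, mul_assoc, PowerSeries.coeff_C_mul,
    PowerSeries.coeff_succ_X_mul]

lemma a_rec (m n : ℕ) :
    a (m + 1) (n + 1) = q * a m (n + 1) + q ^ (m + 1) * a (m + 1) n := by
  have h := congrArg (PowerSeries.coeff (m + 1)) (one_sub_mul_inv n)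
  rw [coeff_one_sub_mul] at h
  rw [show (2:ℕ) = 1 + 1 from rfl, ← rescale_pochX_inv 1 n, PowerSeries.coeff_rescale] at h
  unfold a
  linear_combination h

def S (n : ℕ) : K := ∑ k ∈ Finset.range (n + 1), (-1 : K) ^ k / poch q k
def al (n : ℕ) : K := q ^ (n * (n + 1) / 2) * S n
def ga (n : ℕ) : K := (-1 : K) ^ n * q ^ n.choose 2 / poch q n * q ^ n

lemma al_zero : al 0 = 1 := by simp [al, S, poch]
lemma ga_zero : ga 0 = 1 := by simp [ga, poch]

lemma al_succ (n : ℕ) : al (n + 1) = q ^ (n + 1) * al n + ga (n + 1) := by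
  have e1 : (n + 1) * (n + 2) / 2 = n * (n + 1) / 2 + (n + 1) := by
    have h : (n + 1) * (n + 2) = n * (n + 1) + 2 * (n + 1) := by ring
    omega
  have e2 : (n + 1).choose 2 = n * (n + 1) / 2 := by
    rw [Nat.choose_two_right, Nat.add_sub_cancel, Nat.mul_comm]
  rw [al, al, ga, S, Finset.sum_range_succ, e1, e2, pow_add]
  show q ^ (n * (n + 1) / 2) * q ^ (n + 1) * (S n + (-1) ^ (n + 1) / poch q (n + 1)) = _
  ring

lemma kc (N : ℕ) :
    PowerSeries.coeff N Kq = ∑ n ∈ Finset.range (N + 1), al n * a (N - n) n := by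
  rw [Kq, PowerSeries.coeff_mk]
  rfl

lemma hc (N : ℕ) :
    PowerSeries.coeff N (rescale q H) = ∑ n ∈ Finset.range (N + 1), ga n * a (N - n) n := by
  rw [PowerSeries.coeff_rescale, H, PowerSeries.coeff_mk, Finset.mul_sum]
  refine Finset.sum_congr rfl fun n hn => ?_
  have hn' : n ≤ N := Nat.lt_succ_iff.mp (Finset.mem_range.mp hn)
  have h1 : a (N - n) n = q ^ (N - n) * PowerSeries.coeff (N - n) (pochX 0 n)⁻¹ := by
    rw [a, show (1:ℕ) = 0 + 1 from rfl, ← rescale_pochX_inv 0 n, PowerSeries.coeff_rescale]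
  have h2 : (q : K) ^ N = q ^ n * q ^ (N - n) := by
    rw [← pow_add, Nat.add_sub_cancel' hn']
  rw [h1, ga, h2]
  ring

lemma key (m : ℕ) :
    (∑ n ∈ Finset.range (m + 1 + 1), (al n - ga n) * a (m + 1 - n) n)
      - q * ∑ n ∈ Finset.range (m + 1), (al n - ga n) * a (m - n) n
    = q ^ (m + 1) * ∑ n ∈ Finset.range (m + 1), al n * a (m - n) n := by
  have hD0 : al 0 - ga 0 = 0 := by rw [al_zero, ga_zero, sub_self]
  have hD : ∀ j, al (j + 1) - ga (j + 1) = q ^ (j + 1) * al j := by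
    intro j; rw [al_succ]; ring
  have hA : (∑ n ∈ Finset.range (m + 1 + 1), (al n - ga n) * a (m + 1 - n) n)
      = ∑ j ∈ Finset.range (m + 1), q ^ (j + 1) * al j * a (m - j) (j + 1) := by
    rw [Finset.sum_range_succ']
    simp only [hD0, zero_mul, add_zero, Nat.add_sub_add_right]
    exact Finset.sum_congr rfl fun j _ => by rw [hD]
  have hB : (∑ n ∈ Finset.range (m + 1), (al n - ga n) * a (m - n) n)
      = ∑ j ∈ Finset.range m, q ^ (j + 1) * al j * a (m - (j + 1)) (j + 1) := by
    rw [Finset.sum_range_succ']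
    simp only [hD0, zero_mul, add_zero]
    exact Finset.sum_congr rfl fun j _ => by rw [hD]
  rw [hA, hB, Finset.mul_sum, Finset.mul_sum,
    Finset.sum_range_succ _ m, Finset.sum_range_succ _ m]
  have hlast : q ^ (m + 1) * al m * a (m - m) (m + 1)
      = q ^ (m + 1) * (al m * a (m - m) m) := by
    rw [Nat.sub_self, a_zero, a_zero]; ring
  rw [hlast, add_sub_right_comm]
  congr 1
  rw [← Finset.sum_sub_distrib]
  refine Finset.sum_congr rfl fun j hj => ?_
  have hj' : j < m := Finset.mem_range.mp hj
  have e1 : m - j = (m - 1 - j) + 1 := by omega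
  have e2 : m - (j + 1) = m - 1 - j := by omega
  rw [e1, e2, a_rec (m - 1 - j) j]
  have e3 : (q : K) ^ (j + 1) * q ^ (m - 1 - j + 1) = q ^ (m + 1) := by
    rw [← pow_add]
    congr 1
    omega
  linear_combination (al j * a (m - 1 - j + 1) j) * e3

lemma E :
    (1 - PowerSeries.C q * PowerSeries.X) * rescale q H
        + PowerSeries.C q * PowerSeries.X * rescale q Kq
      = (1 - PowerSeries.C q * PowerSeries.X) * Kq := by
  ext N
  cases N with
  | zero =>
    have e0 : ∀ P : PowerSeries K,
        PowerSeries.coeff 0 ((1 - PowerSeries.C q * PowerSeries.X) * P)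
          = PowerSeries.coeff 0 P := by
      intro P
      rw [PowerSeries.coeff_zero_eq_constantCoeff_apply, map_mul, map_sub, map_one, map_mul,
        PowerSeries.constantCoeff_X, mul_zero, sub_zero, one_mul,
        ← PowerSeries.coeff_zero_eq_constantCoeff_apply]
    have e1 : PowerSeries.coeff 0
        (PowerSeries.C q * PowerSeries.X * rescale q Kq) = 0 := by
      rw [PowerSeries.coeff_zero_eq_constantCoeff_apply, map_mul, map_mul,
        PowerSeries.constantCoeff_X, mul_zero, zero_mul]
    rw [map_add, e0, e0, e1, add_zero, hc 0, kc 0]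
    simp [ga_zero, al_zero]
  | succ m =>
    have hx : PowerSeries.coeff (m + 1)
        (PowerSeries.C q * PowerSeries.X * rescale q Kq)
        = q * PowerSeries.coeff m (rescale q Kq) := by
      rw [mul_assoc, PowerSeries.coeff_C_mul, PowerSeries.coeff_succ_X_mul]
    rw [map_add, coeff_one_sub_mul, coeff_one_sub_mul, hx, hc (m + 1), hc m,
      PowerSeries.coeff_rescale, kc (m + 1), kc m]
    have hk := key m
    simp only [sub_mul, Finset.sum_sub_distrib] at hk
    linear_combination -hk

/-- `K(x) - (xq/(1-xq))·K(xq) = H(xq)`. -/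
theorem stmt5 :
    Kq - PowerSeries.X * PowerSeries.C q *
        (1 - PowerSeries.C q * PowerSeries.X)⁻¹ * rescale q Kq
      = rescale q H := by
  have hu : PowerSeries.constantCoeff (1 - PowerSeries.C q * PowerSeries.X) ≠ 0 := by
    simp
  have hinv := PowerSeries.inv_mul_cancel _ hu
  linear_combination (-(1 - PowerSeries.C q * PowerSeries.X)⁻¹) * E
    + (rescale q H - Kq) * hinv

end FC
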